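/- Let u, v : Ω → ℝ be functions on an open set Ω ⊆ ℝⁿ that are twice differentiable a.e. with Hessians D²u, D²v bounded below by −(2/ε)I a.e., and suppose λ(D²u) ∈ V̄ and λ(D²v) ∈ V̄ a.e., where V̄ is a closed convex symmetric subset of ℝⁿ. Then for α ∈ [0,1], w = αu + (1−α)v is twice differentiable a.e. and λ(D²w) ∈ V̄ almost everywhere. -/

import Mathlib

open Set Filter Matrix Asymptotics MeasureTheory Topology Finset

section aux

variable {n : ℕ}

private lemma diag_conj (Q : Matrix (Fin n) (Fin n) ℝ) (d : Fin n → ℝ) (i : Fin n) :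
    (Q * diagonal d * star Q) i i = ∑ j, d j * Q i j ^ 2 := by
  rw [Matrix.mul_apply]
  refine Finset.sum_congr rfl fun j _ => ?_
  rw [Matrix.mul_apply]
  simp only [Matrix.diagonal_apply, mul_ite, mul_zero, ite_mul, zero_mul,
    Finset.sum_ite_eq' Finset.univ j, Finset.mem_univ, if_true, Matrix.star_apply, star_trivial]
  ring

private lemma keyIneq (y : Fin n → ℝ) (A : Matrix (Fin n) (Fin n) ℝ) (hA : A.IsHermitian)
    (W : Matrix (Fin n) (Fin n) ℝ) (hW : W ∈ Matrix.unitaryGroup (Fin n) ℝ) :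
    ∃ σ : Equiv.Perm (Fin n), ∑ i, y i * (star W * A * W) i i
      ≤ ∑ i, y i * hA.eigenvalues (σ i) := by
  classical
  set U : Matrix (Fin n) (Fin n) ℝ := (hA.eigenvectorUnitary : Matrix (Fin n) (Fin n) ℝ)
  set d : Fin n → ℝ := hA.eigenvalues
  set Q : Matrix (Fin n) (Fin n) ℝ := star W * U
  have hU : U ∈ Matrix.unitaryGroup (Fin n) ℝ := (hA.eigenvectorUnitary).2
  have hQ : Q ∈ Matrix.unitaryGroup (Fin n) ℝ := mul_mem (Unitary.star_mem hW) hU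
  have hspec : A = U * diagonal d * star U := by
    have := hA.spectral_theorem
    simpa [RCLike.ofReal_real_eq_id] using this
  have hQs : star Q = star U * W := by
    simp only [Q, Matrix.star_mul, star_star]
  have hconj : star W * A * W = Q * diagonal d * star Q := by
    rw [hspec, hQs]
    simp only [Q, Matrix.mul_assoc]
  set S : Matrix (Fin n) (Fin n) ℝ := fun i j => Q i j ^ 2 with hSdef
  have hrow : ∀ i, ∑ j, S i j = 1 := by
    intro i
    have h1 : Q * star Q = 1 := (Matrix.mem_unitaryGroup_iff).mp hQ
    have := congrArg (fun M => M i i) h1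
    simpa [Matrix.mul_apply, Matrix.star_apply, S, sq] using this
  have hcol : ∀ j, ∑ i, S i j = 1 := by
    intro j
    have h1 : star Q * Q = 1 := (Matrix.mem_unitaryGroup_iff').mp hQ
    have := congrArg (fun M => M j j) h1
    simpa [Matrix.mul_apply, Matrix.star_apply, S, sq, mul_comm] using this
  have hS : S ∈ doublyStochastic ℝ (Fin n) := by
    rw [mem_doublyStochastic_iff_sum]
    exact ⟨fun i j => sq_nonneg _, hrow, hcol⟩
  obtain ⟨w, hw0, hwsum, hSsum⟩ := exists_eq_sum_perm_of_mem_doublyStochastic hS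
  set φ : Matrix (Fin n) (Fin n) ℝ → ℝ := fun M => ∑ i, ∑ j, y i * d j * M i j with hφ
  have hφS : ∑ i, y i * (star W * A * W) i i = φ S := by
    rw [hconj]
    simp only [φ]
    refine Finset.sum_congr rfl fun i _ => ?_
    rw [diag_conj, Finset.mul_sum]
    exact Finset.sum_congr rfl fun j _ => by simp [S]; ring
  have hSentry : ∀ i j, S i j = ∑ σ : Equiv.Perm (Fin n), w σ * (σ.permMatrix ℝ) i j := by
    intro i j
    rw [← hSsum]
    simp [Matrix.sum_apply]
  have hstep : φ S = ∑ i, ∑ j, ∑ σ : Equiv.Perm (Fin n),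
      w σ * (y i * d j * (σ.permMatrix ℝ) i j) := by
    simp only [φ]
    refine Finset.sum_congr rfl fun i _ => Finset.sum_congr rfl fun j _ => ?_
    rw [hSentry i j, Finset.mul_sum]
    exact Finset.sum_congr rfl fun σ _ => by ring
  have hφsum : φ S = ∑ σ : Equiv.Perm (Fin n), w σ * φ (σ.permMatrix ℝ) := by
    rw [hstep]
    trans (∑ i, ∑ σ : Equiv.Perm (Fin n), ∑ j, w σ * (y i * d j * (σ.permMatrix ℝ) i j))
    · exact Finset.sum_congr rfl fun i _ => Finset.sum_comm
    rw [Finset.sum_comm]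
    refine Finset.sum_congr rfl fun σ _ => ?_
    rw [Finset.mul_sum]
    exact Finset.sum_congr rfl fun i _ => by rw [Finset.mul_sum]
  have hperm : ∀ σ : Equiv.Perm (Fin n), φ (σ.permMatrix ℝ) = ∑ i, y i * d (σ i) := by
    intro σ
    simp only [φ]
    refine Finset.sum_congr rfl fun i _ => ?_
    rw [Finset.sum_eq_single (σ i)]
    · simp [Equiv.Perm.permMatrix, PEquiv.toMatrix_apply, Equiv.toPEquiv]
    · intro j _ hj
      simp [Equiv.Perm.permMatrix, PEquiv.toMatrix_apply, Equiv.toPEquiv, hj.symm]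
    · simp
  -- get a permutation achieving at least φ S
  by_contra hcon
  push_neg at hcon
  have hlt : ∀ σ : Equiv.Perm (Fin n), φ (σ.permMatrix ℝ) < φ S := by
    intro σ
    rw [hperm σ, ← hφS]
    exact hcon σ
  obtain ⟨σ₀, hσ₀⟩ : ∃ σ : Equiv.Perm (Fin n), 0 < w σ := by
    by_contra h
    push_neg at h
    have : ∑ σ : Equiv.Perm (Fin n), w σ = 0 :=
      le_antisymm (Finset.sum_nonpos fun σ _ => h σ) (Finset.sum_nonneg fun σ _ => hw0 σ)
    rw [hwsum] at this; norm_num at this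
  have : φ S < φ S := by
    conv_lhs => rw [hφsum]
    calc ∑ σ : Equiv.Perm (Fin n), w σ * φ (σ.permMatrix ℝ)
        < ∑ σ : Equiv.Perm (Fin n), w σ * φ S := by
          refine Finset.sum_lt_sum (fun σ _ => ?_) ⟨σ₀, Finset.mem_univ _, ?_⟩
          · exact mul_le_mul_of_nonneg_left (hlt σ).le (hw0 σ)
          · exact mul_lt_mul_of_pos_left (hlt σ₀) hσ₀
      _ = φ S := by rw [← Finset.sum_mul, hwsum, one_mul]
  exact lt_irrefl _ this

private lemma comboEig (Vbar : Set (Fin n → ℝ)) (hVc : IsClosed Vbar) (hVconv : Convex ℝ Vbar)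
    (hVsymm : ∀ σ : Equiv.Perm (Fin n), ∀ lam ∈ Vbar, lam ∘ σ ∈ Vbar)
    (α : ℝ) (hα : α ∈ Set.Icc (0:ℝ) 1)
    (A B : Matrix (Fin n) (Fin n) ℝ) (hA : A.IsHermitian) (hB : B.IsHermitian)
    (hAV : hA.eigenvalues ∈ Vbar) (hBV : hB.eigenvalues ∈ Vbar)
    (hC : (α • A + (1 - α) • B).IsHermitian) : hC.eigenvalues ∈ Vbar := by
  classical
  by_contra hmu
  obtain ⟨f, s, hfs, hs⟩ := geometric_hahn_banach_closed_point hVconv hVc hmu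
  set y : Fin n → ℝ := fun i => f (Pi.single i 1) with hy
  have hf : ∀ z : Fin n → ℝ, f z = ∑ i, y i * z i := by
    intro z
    have hz : z = ∑ i, z i • (Pi.single i 1 : Fin n → ℝ) := by
      funext j
      simp [Finset.sum_apply, Pi.single_apply, mul_comm]
    conv_lhs => rw [hz]
    rw [map_sum]
    exact Finset.sum_congr rfl fun i _ => by rw [f.map_smul]; simp [y, mul_comm]
  set C : Matrix (Fin n) (Fin n) ℝ := α • A + (1 - α) • B
  set W : Matrix (Fin n) (Fin n) ℝ := (hC.eigenvectorUnitary : Matrix (Fin n) (Fin n) ℝ)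
  have hW : W ∈ Matrix.unitaryGroup (Fin n) ℝ := (hC.eigenvectorUnitary).2
  have hdiag : star W * C * W = diagonal hC.eigenvalues := by
    have := hC.conjStarAlgAut_star_eigenvectorUnitary
    simpa [RCLike.ofReal_real_eq_id] using this
  have hsplit : star W * C * W = α • (star W * A * W) + (1 - α) • (star W * B * W) := by
    simp only [C, Matrix.mul_add, Matrix.add_mul, Matrix.mul_smul, Matrix.smul_mul]
  obtain ⟨σ, hσ⟩ := keyIneq y A hA W hW
  obtain ⟨τ, hτ⟩ := keyIneq y B hB W hW
  have hμval : f hC.eigenvalues = ∑ i, y i * (star W * C * W) i i := by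
    rw [hf, hdiag]
    exact Finset.sum_congr rfl fun i _ => by simp [Matrix.diagonal_apply_eq]
  have hAin : hA.eigenvalues ∘ σ ∈ Vbar := hVsymm σ _ hAV
  have hBin : hB.eigenvalues ∘ τ ∈ Vbar := hVsymm τ _ hBV
  have hfA : ∑ i, y i * hA.eigenvalues (σ i) < s := by
    have := hfs _ hAin
    rwa [hf] at this
  have hfB : ∑ i, y i * hB.eigenvalues (τ i) < s := by
    have := hfs _ hBin
    rwa [hf] at this
  have h1 : f hC.eigenvalues ≤ α * (∑ i, y i * (star W * A * W) i i)
      + (1 - α) * (∑ i, y i * (star W * B * W) i i) := by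
    rw [hμval, hsplit]
    simp only [Matrix.add_apply, Matrix.smul_apply, smul_eq_mul]
    rw [Finset.mul_sum, Finset.mul_sum, ← Finset.sum_add_distrib]
    exact le_of_eq (Finset.sum_congr rfl fun i _ => by ring)
  have h2 : f hC.eigenvalues ≤ s := by
    calc f hC.eigenvalues
        ≤ α * (∑ i, y i * (star W * A * W) i i)
          + (1 - α) * (∑ i, y i * (star W * B * W) i i) := h1
      _ ≤ α * (∑ i, y i * hA.eigenvalues (σ i))
          + (1 - α) * (∑ i, y i * hB.eigenvalues (τ i)) := by
            gcongr <;> [exact hα.1; linarith [hα.2]]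
      _ ≤ α * s + (1 - α) * s := by
            gcongr <;> first
              | exact hfA.le | exact hfB.le | exact hα.1 | linarith [hα.2]
      _ = s := by ring
  linarith
end aux


theorem stmt16 (n : ℕ) (Ω : Set (Fin n → ℝ)) (hΩ : IsOpen Ω)
    (Vbar : Set (Fin n → ℝ)) (hVc : IsClosed Vbar) (hVconv : Convex ℝ Vbar)
    (hVsymm : ∀ σ : Equiv.Perm (Fin n), ∀ lam ∈ Vbar, lam ∘ σ ∈ Vbar)
    (ε : ℝ) (hε : 0 < ε)
    (u v : (Fin n → ℝ) → ℝ)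
    (bu bv : (Fin n → ℝ) → (Fin n → ℝ)) (Hu Hv : (Fin n → ℝ) → Matrix (Fin n) (Fin n) ℝ)
    (hu : ∀ᵐ x : Fin n → ℝ, x ∈ Ω →
      ((fun y => u y - (u x + bu x ⬝ᵥ (y - x) + (1/2) * ((Hu x *ᵥ (y - x)) ⬝ᵥ (y - x))))
          =o[𝓝 x] (fun y => ‖y - x‖ ^ 2))
      ∧ ∃ h : (Hu x).IsHermitian, h.eigenvalues ∈ Vbar)
    (hv : ∀ᵐ x : Fin n → ℝ, x ∈ Ω →
      ((fun y => v y - (v x + bv x ⬝ᵥ (y - x) + (1/2) * ((Hv x *ᵥ (y - x)) ⬝ᵥ (y - x))))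
          =o[𝓝 x] (fun y => ‖y - x‖ ^ 2))
      ∧ ∃ h : (Hv x).IsHermitian, h.eigenvalues ∈ Vbar)
    (hlbu : ∀ᵐ x : Fin n → ℝ, x ∈ Ω →
      (Hu x + (2/ε) • (1 : Matrix (Fin n) (Fin n) ℝ)).PosSemidef)
    (hlbv : ∀ᵐ x : Fin n → ℝ, x ∈ Ω →
      (Hv x + (2/ε) • (1 : Matrix (Fin n) (Fin n) ℝ)).PosSemidef)
    (α : ℝ) (hα : α ∈ Set.Icc (0:ℝ) 1) :
    ∀ᵐ x : Fin n → ℝ, x ∈ Ω →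
      ((fun y => (α • u + (1 - α) • v) y -
          ((α • u + (1 - α) • v) x + (α • bu x + (1 - α) • bv x) ⬝ᵥ (y - x) +
            (1/2) * (((α • Hu x + (1 - α) • Hv x) *ᵥ (y - x)) ⬝ᵥ (y - x))))
        =o[𝓝 x] (fun y => ‖y - x‖ ^ 2))
      ∧ ∃ h : (α • Hu x + (1 - α) • Hv x).IsHermitian, h.eigenvalues ∈ Vbar := by
  filter_upwards [hu, hv] with x hux hvx hxΩ
  obtain ⟨hu1, hAu, hAuV⟩ := hux hxΩ
  obtain ⟨hv1, hAv, hAvV⟩ := hvx hxΩ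
  have hHerm : (α • Hu x + (1 - α) • Hv x).IsHermitian := by
    have h1 : (α • Hu x).IsHermitian := by
      unfold Matrix.IsHermitian at hAu ⊢
      rw [Matrix.conjTranspose_smul, hAu, star_trivial]
    have h2 : ((1 - α) • Hv x).IsHermitian := by
      unfold Matrix.IsHermitian at hAv ⊢
      rw [Matrix.conjTranspose_smul, hAv, star_trivial]
    exact h1.add h2
  refine ⟨?_, hHerm, comboEig Vbar hVc hVconv hVsymm α hα _ _ hAu hAv hAuV hAvV hHerm⟩
  have heq : (fun y => (α • u + (1 - α) • v) y -
      ((α • u + (1 - α) • v) x + (α • bu x + (1 - α) • bv x) ⬝ᵥ (y - x) +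
        (1/2) * (((α • Hu x + (1 - α) • Hv x) *ᵥ (y - x)) ⬝ᵥ (y - x))))
      = (fun y => α • (u y - (u x + bu x ⬝ᵥ (y - x) + (1/2) * ((Hu x *ᵥ (y - x)) ⬝ᵥ (y - x))))
          + (1 - α) • (v y - (v x + bv x ⬝ᵥ (y - x)
            + (1/2) * ((Hv x *ᵥ (y - x)) ⬝ᵥ (y - x))))) := by
    funext y
    simp only [Pi.add_apply, Pi.smul_apply, smul_eq_mul, add_dotProduct,
      smul_dotProduct, Matrix.add_mulVec, Matrix.smul_mulVec,
      smul_dotProduct]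
    ring
  rw [heq]
  exact (hu1.const_smul_left α).add (hv1.const_smul_left (1 - α))
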